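/- Weak theorem of alternatives for poly-quadratic stability: it cannot simultaneously hold that (a) there exist symmetric positive definite matrices P₁,…,P_N ∈ ℝ^{n×n} with P_i − A_iᵀ P_j A_i positive definite for all i,j ∈ {1,…,N}, and (b) there exist symmetric positive semidefinite matrices R₁,…,R_{N²} ∈ ℝ^{n×n}, not all zero, such that Σ_{j=1}^N (A_j R_{N(j−1)+i} A_jᵀ − R_{N(i−1)+j}) is positive semidefinite for every i ∈ {1,…,N}. -/

import Mathlib

open Matrix

private lemma diag_quad {n m : ℕ} (B : Matrix (Fin m) (Fin n) ℝ) (P : Matrix (Fin n) (Fin n) ℝ)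
    (i : Fin m) : (B * P * Bᵀ) i i = star (B i) ⬝ᵥ (P *ᵥ B i) := by
  simp [mul_apply, dotProduct, mulVec, Finset.mul_sum, Finset.sum_mul]
  rw [Finset.sum_comm]
  congr 1; ext j; congr 1; ext k; ring

private lemma trace_psd_nonneg {n : ℕ} {M : Matrix (Fin n) (Fin n) ℝ} (hM : M.PosSemidef) :
    0 ≤ M.trace := by
  rw [Matrix.trace]
  apply Finset.sum_nonneg
  intro i _
  have := hM.dotProduct_mulVec_nonneg (Pi.single i 1)
  simpa [mulVec_single, dotProduct_single] using this

private lemma trace_mul_nonneg {n : ℕ} {P M : Matrix (Fin n) (Fin n) ℝ}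
    (hP : P.PosSemidef) (hM : M.PosSemidef) : 0 ≤ (P * M).trace := by
  obtain ⟨B, rfl⟩ : ∃ B : Matrix (Fin n) (Fin n) ℝ, M = Bᴴ * B := by
    open scoped MatrixOrder in exact CStarAlgebra.nonneg_iff_eq_star_mul_self.mp hM.nonneg
  have h1 : (P * (Bᴴ * B)).trace = (B * P * Bᴴ).trace := by
    rw [← Matrix.mul_assoc, Matrix.trace_mul_comm, Matrix.mul_assoc]
  rw [h1]
  exact trace_psd_nonneg (hP.mul_mul_conjTranspose_same B)

private lemma trace_mul_pos {n : ℕ} {P M : Matrix (Fin n) (Fin n) ℝ}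
    (hP : P.PosDef) (hM : M.PosSemidef) (hM0 : M ≠ 0) : 0 < (P * M).trace := by
  obtain ⟨B, rfl⟩ : ∃ B : Matrix (Fin n) (Fin n) ℝ, M = Bᴴ * B := by
    open scoped MatrixOrder in exact CStarAlgebra.nonneg_iff_eq_star_mul_self.mp hM.nonneg
  have h1 : (P * (Bᴴ * B)).trace = (B * P * Bᴴ).trace := by
    rw [← Matrix.mul_assoc, Matrix.trace_mul_comm, Matrix.mul_assoc]
  rw [h1]
  have hB : B ≠ 0 := by rintro rfl; simp at hM0
  obtain ⟨i, hi⟩ : ∃ i, B i ≠ 0 := by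
    by_contra h
    push_neg at h
    exact hB (by ext i j; simp [h i])
  have hBT : Bᴴ = Bᵀ := by ext; simp
  rw [Matrix.trace, hBT]
  refine Finset.sum_pos' (fun k _ => ?_) ⟨i, Finset.mem_univ i, ?_⟩
  · rw [Matrix.diag_apply, diag_quad]
    rcases eq_or_ne (B k) 0 with h | h
    · simp [h]
    · exact le_of_lt (hP.dotProduct_mulVec_pos h)
  · rw [Matrix.diag_apply, diag_quad]
    exact hP.dotProduct_mulVec_pos hi

/-- `R j i` stands for `R_{N(j-1)+i}` of the paper. -/
theorem weak_toa_poly_qs {n N : ℕ} (A : Fin N → Matrix (Fin n) (Fin n) ℝ) :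
    ¬ ((∃ P : Fin N → Matrix (Fin n) (Fin n) ℝ,
        (∀ i, (P i).IsSymm ∧ (P i).PosDef) ∧
        ∀ i j, (P i - (A i)ᵀ * P j * A i).PosDef) ∧
      (∃ R : Fin N → Fin N → Matrix (Fin n) (Fin n) ℝ,
        (∀ j i, (R j i).IsSymm ∧ (R j i).PosSemidef) ∧
        (¬ ∀ j i, R j i = 0) ∧
        ∀ i, (∑ j, (A j * R j i * (A j)ᵀ - R i j)).PosSemidef)) := by
  rintro ⟨⟨P, hP, hPA⟩, R, hR, hRne, hsum⟩
  set T := ∑ i, ((P i) * ∑ j, (A j * R j i * (A j)ᵀ - R i j)).trace with hTdef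
  have hT0 : 0 ≤ T :=
    Finset.sum_nonneg fun i _ => trace_mul_nonneg (hP i).2.posSemidef (hsum i)
  have htr : ∀ (X Y Z : Matrix (Fin n) (Fin n) ℝ),
      (X * (Y * Z * Yᵀ)).trace = ((Yᵀ * X * Y) * Z).trace := by
    intro X Y Z
    rw [show X * (Y * Z * Yᵀ) = (X * Y * Z) * Yᵀ by
      simp only [Matrix.mul_assoc], Matrix.trace_mul_comm]
    simp only [Matrix.mul_assoc]
  have e1 : T = ∑ i, ∑ j, ((((A j)ᵀ * P i * A j) * R j i).trace - (P i * R i j).trace) := by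
    rw [hTdef]
    congr 1; ext i
    rw [Matrix.mul_sum, Matrix.trace_sum]
    congr 1; ext j
    rw [mul_sub, Matrix.trace_sub, htr]
  have e2 : ∑ i, ∑ j, (((A j)ᵀ * P i * A j) * R j i).trace
      = ∑ i, ∑ j, (((A i)ᵀ * P j * A i) * R i j).trace := Finset.sum_comm ..
  have e3 : T = -∑ i, ∑ j, ((P i - (A i)ᵀ * P j * A i) * R i j).trace := by
    rw [e1]
    simp only [Finset.sum_sub_distrib]
    rw [e2, ← Finset.sum_neg_distrib]
    simp only [← Finset.sum_sub_distrib, ← Finset.sum_neg_distrib]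
    congr 1; ext i; congr 1; ext j
    rw [sub_mul, Matrix.trace_sub]
    ring
  push_neg at hRne
  obtain ⟨i0, j0, h0⟩ := hRne
  have hS : 0 < ∑ i, ∑ j, ((P i - (A i)ᵀ * P j * A i) * R i j).trace := by
    apply Finset.sum_pos' (fun i _ => Finset.sum_nonneg fun j _ =>
      trace_mul_nonneg (hPA i j).posSemidef (hR i j).2)
    refine ⟨i0, Finset.mem_univ i0, ?_⟩
    apply Finset.sum_pos' (fun j _ => trace_mul_nonneg (hPA i0 j).posSemidef (hR i0 j).2)
    exact ⟨j0, Finset.mem_univ j0, trace_mul_pos (hPA i0 j0) (hR i0 j0).2 h0⟩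
  rw [e3] at hT0
  linarith
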